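/- For α_k ∈ (0, 2), with the choices α = α_k/(100 + 5α_k), β = 4α_k/(100 + 5α_k), γ = 100/(100 + 5α_k) (so α + β + γ = 1), the minimum of the five quantities α_k + (2 - α_k)α, α_k(1 + β/2 + γ/2 - α) - 3α, -3α/2 + 3(β + γ), α_k(1 - α - β/2) + 5β/2 - 3α, and α_k(1 + γ/2 - α - β/2) - 3α - 2β equals ((102 + 4α_k)/(100 + 5α_k))·α_k, and this value lies strictly between α_k and 2. -/
import Mathlib


open Set

/-- The exponent improvement computation: for `α_k ∈ (0,2)` and the choices
`a = α_k/(100+5α_k)`, `b = 4α_k/(100+5α_k)`, `c = 100/(100+5α_k)` (so `a+b+c = 1`),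
the minimum of the five exponents equals `((102+4α_k)/(100+5α_k))·α_k`, which lies
strictly between `α_k` and `2`. -/
theorem exponent_min (ak a b c : ℝ) (hak : ak ∈ Ioo (0 : ℝ) 2)
    (ha : a = ak / (100 + 5 * ak)) (hb : b = 4 * ak / (100 + 5 * ak))
    (hc : c = 100 / (100 + 5 * ak)) :
    a + b + c = 1 ∧
    min (ak + (2 - ak) * a)
      (min (ak * (1 + b / 2 + c / 2 - a) - 3 * a)
        (min (-(3 * a) / 2 + 3 * (b + c))
          (min (ak * (1 - a - b / 2) + 5 * b / 2 - 3 * a)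
            (ak * (1 + c / 2 - a - b / 2) - 3 * a - 2 * b))))
      = ((102 + 4 * ak) / (100 + 5 * ak)) * ak ∧
    ak < ((102 + 4 * ak) / (100 + 5 * ak)) * ak ∧
    ((102 + 4 * ak) / (100 + 5 * ak)) * ak < 2 := by
  obtain ⟨h0, h2⟩ := hak
  have hd : (0:ℝ) < 100 + 5 * ak := by linarith
  have hdne : (100 + 5 * ak) ≠ 0 := ne_of_gt hd
  subst ha hb hc
  refine ⟨by field_simp; ring, ?_, ?_, ?_⟩
  · set T := ((102 + 4 * ak) / (100 + 5 * ak)) * ak with hT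
    have e1 : ak + (2 - ak) * (ak / (100 + 5 * ak)) = T := by
      rw [hT]; field_simp; ring
    have key : ∀ x : ℝ, 0 ≤ x / (100 + 5 * ak) → T ≤ T + x / (100 + 5 * ak) := by
      intro x hx; linarith
    have l2 : T ≤ ak * (1 + 4 * ak / (100 + 5 * ak) / 2 + 100 / (100 + 5 * ak) / 2
        - ak / (100 + 5 * ak)) - 3 * (ak / (100 + 5 * ak)) := by
      rw [← sub_nonneg]
      have : ak * (1 + 4 * ak / (100 + 5 * ak) / 2 + 100 / (100 + 5 * ak) / 2
          - ak / (100 + 5 * ak)) - 3 * (ak / (100 + 5 * ak)) - T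
          = (ak * (45 + 2 * ak)) / (100 + 5 * ak) := by
        rw [hT]; field_simp; ring
      rw [this]; positivity
    have l3 : T ≤ -(3 * (ak / (100 + 5 * ak))) / 2
        + 3 * (4 * ak / (100 + 5 * ak) + 100 / (100 + 5 * ak)) := by
      rw [← sub_nonneg]
      have : -(3 * (ak / (100 + 5 * ak))) / 2
          + 3 * (4 * ak / (100 + 5 * ak) + 100 / (100 + 5 * ak)) - T
          = (600 - 183 * ak - 8 * ak ^ 2) / (2 * (100 + 5 * ak)) := by
        rw [hT]; field_simp; ring
      rw [this]
      apply div_nonneg _ (by linarith)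
      nlinarith
    have l4 : T ≤ ak * (1 - ak / (100 + 5 * ak) - 4 * ak / (100 + 5 * ak) / 2)
        + 5 * (4 * ak / (100 + 5 * ak)) / 2 - 3 * (ak / (100 + 5 * ak)) := by
      rw [← sub_nonneg]
      have : ak * (1 - ak / (100 + 5 * ak) - 4 * ak / (100 + 5 * ak) / 2)
          + 5 * (4 * ak / (100 + 5 * ak)) / 2 - 3 * (ak / (100 + 5 * ak)) - T
          = (ak * (5 - 2 * ak)) / (100 + 5 * ak) := by
        rw [hT]; field_simp; ring
      rw [this]
      apply div_nonneg _ (by linarith)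
      nlinarith
    have l5 : T ≤ ak * (1 + 100 / (100 + 5 * ak) / 2 - ak / (100 + 5 * ak)
        - 4 * ak / (100 + 5 * ak) / 2) - 3 * (ak / (100 + 5 * ak))
        - 2 * (4 * ak / (100 + 5 * ak)) := by
      rw [← sub_nonneg]
      have : ak * (1 + 100 / (100 + 5 * ak) / 2 - ak / (100 + 5 * ak)
          - 4 * ak / (100 + 5 * ak) / 2) - 3 * (ak / (100 + 5 * ak))
          - 2 * (4 * ak / (100 + 5 * ak)) - T
          = (ak * (37 - 2 * ak)) / (100 + 5 * ak) := by
        rw [hT]; field_simp; ring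
      rw [this]
      apply div_nonneg _ (by linarith)
      nlinarith
    rw [e1]
    exact min_eq_left (le_min l2 (le_min l3 (le_min l4 l5)))
  · rw [div_mul_eq_mul_div, lt_div_iff₀ hd]; nlinarith
  · rw [div_mul_eq_mul_div, div_lt_iff₀ hd]; nlinarith
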